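/- Let H(t) ∈ ℂ[[t]] be a formal power series with constant term 1. If H is 2-algebraically rigid, then H is strongly algebraically rigid: for every n ≥ 1 and all pairwise distinct integers w_0, …, w_n, the series S_H(w_0,…,w_n;t) is constant. In other words, AR² = AR³ = ⋯ = AR^∞. -/

import Mathlib

noncomputable section

namespace RigidGenus

variable {R : Type*} [Field R]

/-- Termwise substitution `t ↦ w·t` on Laurent series: the coefficient of `t^k`
is multiplied by `w^k`. -/
def zscale (w : R) (f : LaurentSeries R) : LaurentSeries R where
  coeff k := w ^ k * f.coeff k
  isPWO_support' := f.isPWO_support'.mono (fun k hk => by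
    simp only [Function.mem_support, ne_eq] at hk ⊢
    exact fun h => hk (by rw [h, mul_zero]))

/-- Termwise derivative of a Laurent series: `(∑ f_k t^k)' = ∑ k f_k t^(k-1)`. -/
def lderiv (f : LaurentSeries R) : LaurentSeries R where
  coeff k := ((k + 1 : ℤ) : R) * f.coeff (k + 1)
  isPWO_support' := by
    have himg : ((fun k : ℤ => k - 1) '' (Function.support f.coeff)).IsPWO :=
      f.isPWO_support'.image_of_monotone (fun a b h => sub_le_sub_right h 1)
    refine himg.mono (fun k hk => ?_)
    simp only [Function.mem_support, ne_eq] at hk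
    exact ⟨k + 1, fun h => hk (by rw [h, mul_zero]), by ring⟩

/-- `F_H = H(t)/t`, as a formal Laurent series. -/
def FH (H : PowerSeries R) : LaurentSeries R :=
  HahnSeries.single (-1 : ℤ) (1 : R) * HahnSeries.ofPowerSeries ℤ R H

/-- `S_H(w_0,…,w_n;t) = ∑_i ∏_{j ≠ i} F_H((w_j - w_i) t)`. -/
def SH (H : PowerSeries R) {n : ℕ} (w : Fin (n + 1) → ℤ) : LaurentSeries R :=
  ∑ i : Fin (n + 1), ∏ j ∈ Finset.univ.erase i, zscale ((w j - w i : ℤ) : R) (FH H)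

/-- `H` is `n`-algebraically rigid: for all `1 ≤ m ≤ n` and pairwise distinct
integers `w_0, …, w_m`, the Laurent series `S_H(w_0,…,w_m;t)` is constant. -/
def AlgRigid (H : PowerSeries R) (n : ℕ) : Prop :=
  ∀ m : ℕ, 1 ≤ m → m ≤ n → ∀ w : Fin (m + 1) → ℤ, Function.Injective w →
    ∀ k : ℤ, k ≠ 0 → (SH H w).coeff k = 0

/-- The formal exponential series `exp (a t)`. -/
def expS (a : R) : PowerSeries R := PowerSeries.mk fun n => a ^ n / n.factorial

/-- The formal sine series `sin (a t)`. -/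
def sinS (a : R) : PowerSeries R :=
  PowerSeries.mk fun n => if n % 2 = 1 then (-1 : R) ^ (n / 2) * a ^ n / n.factorial else 0

/-- The formal cosine series `cos (a t)`. -/
def cosS (a : R) : PowerSeries R :=
  PowerSeries.mk fun n => if n % 2 = 0 then (-1 : R) ^ (n / 2) * a ^ n / n.factorial else 0

/-- `H = D_{a,b}`, the generalized Todd series `t(a·coth(at)+b)`: for `a ≠ 0` it is
characterized by `D_{a,b}(t)·(e^{at} - e^{-at}) = t·(a(e^{at}+e^{-at}) + b(e^{at}-e^{-at}))`,
and `D_{0,b}(t) = 1 + bt`. -/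
def IsDab (a b : R) (H : PowerSeries R) : Prop :=
  (a ≠ 0 ∧ H * (expS a - expS (-a)) =
      PowerSeries.X * (PowerSeries.C a * (expS a + expS (-a)) +
        PowerSeries.C b * (expS a - expS (-a)))) ∨
  (a = 0 ∧ H = 1 + PowerSeries.C b * PowerSeries.X)

/-- `H = G_{a,b}`, the series `t(a·cot(at)+b)`: for `a ≠ 0` it is characterized by
`G_{a,b}(t)·sin(at) = t·(a·cos(at) + b·sin(at))`, and `G_{0,b}(t) = 1 + bt`. -/
def IsGab (a b : R) (H : PowerSeries R) : Prop :=
  (a ≠ 0 ∧ H * sinS a =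
      PowerSeries.X * (PowerSeries.C a * cosS a + PowerSeries.C b * sinS a)) ∨
  (a = 0 ∧ H = 1 + PowerSeries.C b * PowerSeries.X)


open HahnSeries

section Abstract
variable {K : Type*} [CommRing K] {ι : Type*} [DecidableEq ι]
/-- two-step recursive sequence -/
def qseq (e : K) : ℕ → K
  | 0 => 0
  | 1 => 1
  | (n+2) => -(e * qseq e n)

variable (g : ι → ι → K) (e : K)

def RR (i : ι) (T : Finset ι) : K := ∏ j ∈ T.erase i, g i j
def QQ (T : Finset ι) : K := ∑ i ∈ T, RR g i T

lemma L1 (p : ι) (B : Finset ι) (hp : p ∉ B) :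
    QQ g (insert p B) = (∏ j ∈ B, g p j) + ∑ i ∈ B, g i p * RR g i B := by
  rw [QQ, Finset.sum_insert hp]
  congr 1
  · rw [RR, Finset.erase_insert hp]
  · refine Finset.sum_congr rfl fun i hi => ?_
    have hip : i ≠ p := fun h => hp (h ▸ hi)
    rw [RR, Finset.erase_insert_of_ne hip.symm,
      Finset.prod_insert (fun h => hp (Finset.mem_of_mem_erase h)), RR]

lemma L2 (hanti : ∀ i j : ι, i ≠ j → g j i = - g i j) (p : ι) (B : Finset ι) (hp : p ∉ B) :
    (∏ j ∈ B, g p j) = QQ g (insert p B) + ∑ j ∈ B, g p j * RR g j B := by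
  rw [L1 g p B hp, add_assoc, ← Finset.sum_add_distrib]
  have h : ∑ i ∈ B, (g i p * RR g i B + g p i * RR g i B) = 0 := by
    refine Finset.sum_eq_zero fun i hi => ?_
    rw [hanti i p (fun h => hp (h ▸ hi))]
    ring
  rw [h, add_zero]

lemma L3 (hanti : ∀ i j : ι, i ≠ j → g j i = - g i j)
    (htriple : ∀ i j k : ι, i ≠ j → j ≠ k → i ≠ k →
      g i j * g j k + g j k * g k i + g k i * g i j = e)
    (p c : ι) (B : Finset ι) (hpc : p ≠ c) (hp : p ∉ B) (hc : c ∉ B) :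
    QQ g (insert p (insert c B)) =
      (QQ g (insert p B) - QQ g (insert c B)) * g p c - e * QQ g B := by
  have hpcB : p ∉ insert c B := by simp [hp, hpc]
  have hRins : ∀ j ∈ B, RR g j (insert c B) = g j c * RR g j B := fun j hj => by
    have hcj : c ≠ j := fun h => hc (h ▸ hj)
    rw [RR, Finset.erase_insert_of_ne hcj,
      Finset.prod_insert (fun h => hc (Finset.mem_of_mem_erase h)), RR]
  have hkey : ∀ j ∈ B, g p c * g p j = g j c * g p j - g j c * g p c - e := by
    intro j hj
    have hpj : p ≠ j := fun h => hp (h ▸ hj)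
    have hjc : j ≠ c := fun h => hc (h ▸ hj)
    have h1 := htriple p j c hpj hjc hpc
    have h2 := hanti p c hpc
    rw [h2] at h1
    linear_combination -h1
  have e1 : QQ g (insert p (insert c B)) =
      (∏ j ∈ insert c B, g p j) - ∑ j ∈ insert c B, g p j * RR g j (insert c B) := by
    rw [L2 g hanti p (insert c B) hpcB]; ring
  have h2 : (∏ j ∈ insert c B, g p j) = g p c * ∏ j ∈ B, g p j :=
    Finset.prod_insert hc
  have h3 : (∏ j ∈ B, g p j) = QQ g (insert p B) + ∑ j ∈ B, g p j * RR g j B :=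
    L2 g hanti p B hp
  have h4 : (∑ j ∈ insert c B, g p j * RR g j (insert c B)) =
      g p c * RR g c (insert c B) + ∑ j ∈ B, g p j * RR g j (insert c B) :=
    Finset.sum_insert hc
  have h5 : g p c * (∑ j ∈ B, g p j * RR g j B) =
      (∑ j ∈ B, g p j * RR g j (insert c B)) -
        (∑ j ∈ B, RR g j (insert c B)) * g p c - e * QQ g B := by
    rw [Finset.mul_sum, QQ, Finset.sum_mul, Finset.mul_sum, ← Finset.sum_sub_distrib,
      ← Finset.sum_sub_distrib]
    refine Finset.sum_congr rfl fun j hj => ?_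
    rw [hRins j hj]
    linear_combination (RR g j B) * hkey j hj
  have h6 : (∑ j ∈ B, RR g j (insert c B)) =
      QQ g (insert c B) - RR g c (insert c B) := by
    rw [QQ, Finset.sum_insert hc]; ring
  linear_combination e1 + h2 + g p c * h3 + h5 - h4 - g p c * h6

lemma QQ_eq (hanti : ∀ i j : ι, i ≠ j → g j i = - g i j)
    (htriple : ∀ i j k : ι, i ≠ j → j ≠ k → i ≠ k →
      g i j * g j k + g j k * g k i + g k i * g i j = e) :
    ∀ (n : ℕ) (s : Finset ι), s.card = n → QQ g s = qseq e n := by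
  intro n
  induction n using Nat.strong_induction_on with
  | _ n ih =>
    intro s hs
    match n, hs with
    | 0, hs =>
      rw [Finset.card_eq_zero] at hs
      subst hs; simp [QQ, qseq]
    | 1, hs =>
      rw [Finset.card_eq_one] at hs
      obtain ⟨a, rfl⟩ := hs
      simp [QQ, RR, qseq]
    | (n+2), hs =>
      obtain ⟨p, hp⟩ := Finset.card_pos.mp (by omega : 0 < s.card)
      have h1 : 0 < (s.erase p).card := by
        rw [Finset.card_erase_of_mem hp]; omega
      obtain ⟨c, hcmem⟩ := Finset.card_pos.mp h1
      have hcp : c ≠ p := (Finset.mem_erase.mp hcmem).1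
      have hcs : c ∈ s := (Finset.mem_erase.mp hcmem).2
      set B := (s.erase p).erase c with hB
      have hpB : p ∉ B := fun h =>
        (Finset.notMem_erase p s) (Finset.mem_of_mem_erase h)
      have hcB : c ∉ B := Finset.notMem_erase c _
      have hsB : s = insert p (insert c B) := by
        rw [hB, Finset.insert_erase hcmem, Finset.insert_erase hp]
      have hBcard : B.card = n := by
        rw [hB, Finset.card_erase_of_mem hcmem, Finset.card_erase_of_mem hp, hs]
        omega

      have hc1 : (insert p B).card = n + 1 := by
        rw [Finset.card_insert_of_notMem hpB, hBcard]
      have hc2 : (insert c B).card = n + 1 := by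
        rw [Finset.card_insert_of_notMem hcB, hBcard]
      rw [hsB, L3 g e hanti htriple p c B (Ne.symm hcp) hpB hcB,
        ih (n+1) (by omega) _ hc1, ih (n+1) (by omega) _ hc2,
        ih n (by omega) _ hBcard]
      simp [qseq]

end Abstract


lemma zscale_coeff (w : R) (f : LaurentSeries R) (k : ℤ) :
    (zscale w f).coeff k = w ^ k * f.coeff k := rfl

lemma FH_coeff_ofNat (H : PowerSeries R) (n : ℕ) :
    (FH H).coeff ((n : ℤ) - 1) = PowerSeries.coeff n H := by
  have h : ((n : ℤ) - 1) = (n : ℤ) + (-1 : ℤ) := by ring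
  rw [FH, h, coeff_single_mul_add, one_mul, ofPowerSeries_apply_coeff]

lemma FH_coeff_neg (H : PowerSeries R) (k : ℤ) (hk : k < -1) :
    (FH H).coeff k = 0 := by
  have h : k = (k + 1) + (-1 : ℤ) := by ring
  rw [FH, h, coeff_single_mul_add, one_mul, ofPowerSeries_apply]
  rw [embDomain_notin_range]
  rintro ⟨m, hm⟩
  change (m : ℤ) = k + 1 at hm
  omega

set_option linter.unusedSectionVars false

variable [CharZero R]

/-- normalized scaled series -/
def Gs (H : PowerSeries R) (u : ℤ) : LaurentSeries R :=
  zscale ((u : ℤ) : R) (FH H) - HahnSeries.C (PowerSeries.coeff 1 H)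

lemma Gs_coeff_ne (H : PowerSeries R) (u : ℤ) (k : ℤ) (hk : k ≠ 0) :
    (Gs H u).coeff k = ((u : ℤ) : R) ^ k * (FH H).coeff k := by
  rw [Gs, HahnSeries.coeff_sub, zscale_coeff, HahnSeries.C_apply,
    HahnSeries.coeff_single_of_ne hk, sub_zero]

lemma Gs_coeff_zero (H : PowerSeries R) (u : ℤ) : (Gs H u).coeff 0 = 0 := by
  rw [Gs, HahnSeries.coeff_sub, zscale_coeff, HahnSeries.C_apply,
    HahnSeries.coeff_single_same, zpow_zero, one_mul]
  have h0 : ((1 : ℕ) : ℤ) - 1 = (0 : ℤ) := by norm_num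
  rw [← h0, FH_coeff_ofNat, sub_self]

lemma Gs_coeff_neg_one (H : PowerSeries R) (hH : PowerSeries.constantCoeff H = 1)
    (u : ℤ) : (Gs H u).coeff (-1) = ((u : ℤ) : R)⁻¹ := by
  have hF : (FH H).coeff (-1) = 1 := by
    have := FH_coeff_ofNat H 0
    simp only [Nat.cast_zero, zero_sub, PowerSeries.coeff_zero_eq_constantCoeff] at this
    rw [this, hH]
  rw [Gs_coeff_ne H u (-1) (by norm_num), hF, mul_one, zpow_neg_one]

lemma Gs_coeff_one (H : PowerSeries R) (u : ℤ) :
    (Gs H u).coeff 1 = ((u : ℤ) : R) * PowerSeries.coeff 2 H := by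
  have hF : (FH H).coeff 1 = PowerSeries.coeff 2 H := by
    have := FH_coeff_ofNat H 2
    norm_num at this
    exact this
  rw [Gs_coeff_ne H u 1 one_ne_zero, hF, zpow_one]

lemma SH_two (H : PowerSeries R) (w : Fin 2 → ℤ) :
    SH H w = zscale ((w 1 - w 0 : ℤ) : R) (FH H) + zscale ((w 0 - w 1 : ℤ) : R) (FH H) := by
  rw [SH, Fin.sum_univ_two]
  have h0 : (Finset.univ.erase (0 : Fin 2)) = {1} := by decide
  have h1 : (Finset.univ.erase (1 : Fin 2)) = {0} := by decide
  rw [h0, h1, Finset.prod_singleton, Finset.prod_singleton]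

lemma Gs_coeff_low (H : PowerSeries R) (u : ℤ) (k : ℤ) (hk : k < -1) :
    (Gs H u).coeff k = 0 := by
  rw [Gs_coeff_ne H u k (by omega), FH_coeff_neg H k hk, mul_zero]

lemma Gs_support (H : PowerSeries R) (u : ℤ) (k : ℤ) (hk : (Gs H u).coeff k ≠ 0) :
    k = -1 ∨ 1 ≤ k := by
  by_contra hcon
  push_neg at hcon
  rcases lt_trichotomy k 0 with h | h | h
  · rcases eq_or_lt_of_le (show k ≤ -1 by omega) with h' | h'
    · exact hcon.1 h'
    · exact hk (Gs_coeff_low H u k (by omega))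
  · exact hk (h ▸ Gs_coeff_zero H u)
  · omega

lemma Gs_anti (H : PowerSeries R) (hrig : AlgRigid H 2) (u : ℤ) (hu : u ≠ 0) :
    Gs H (-u) = - Gs H u := by
  have hw : Function.Injective (![0, u] : Fin 2 → ℤ) := by
    intro i j hij
    fin_cases i <;> fin_cases j <;> simp_all <;> omega
  have h := hrig 1 le_rfl (by norm_num) ![0, u] hw
  have hSH : SH H ![0, u] = zscale ((u : ℤ) : R) (FH H) + zscale ((-u : ℤ) : R) (FH H) := by
    have := SH_two H ![0, u]
    simpa using this
  rw [eq_neg_iff_add_eq_zero]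
  ext k
  by_cases hk : k = 0
  · subst hk
    rw [HahnSeries.coeff_add, Gs_coeff_zero, Gs_coeff_zero, add_zero, HahnSeries.coeff_zero]
  · have hk' := h k hk
    rw [hSH, HahnSeries.coeff_add, zscale_coeff, zscale_coeff] at hk'
    rw [HahnSeries.coeff_add, Gs_coeff_ne H _ k hk, Gs_coeff_ne H _ k hk,
      HahnSeries.coeff_zero]
    rw [add_comm] at hk'
    exact hk'

lemma Gs_mul_coeff_zero (H : PowerSeries R) (hH : PowerSeries.constantCoeff H = 1)
    (u v : ℤ) :
    (Gs H u * Gs H v).coeff 0 =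
      PowerSeries.coeff 2 H * (((v : ℤ) : R) / ((u : ℤ) : R) + ((u : ℤ) : R) / ((v : ℤ) : R)) := by
  classical
  rw [HahnSeries.coeff_mul]
  have hsub : Finset.antidiagonal (Gs H u).isPWO_support (Gs H v).isPWO_support 0 ⊆
      ({((-1 : ℤ), (1 : ℤ)), ((1 : ℤ), (-1 : ℤ))} : Finset (ℤ × ℤ)) := by
    rintro ⟨x, y⟩ hxy
    rw [Finset.mem_antidiagonal] at hxy
    obtain ⟨hx, hy, hsum⟩ := hxy
    have h1 := Gs_support H u x hx
    have h2 := Gs_support H v y hy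
    simp only [Finset.mem_insert, Finset.mem_singleton, Prod.mk.injEq]
    omega
  rw [Finset.sum_subset hsub (fun p hp hnp => ?_)]
  · rw [Finset.sum_pair (by decide : ((-1 : ℤ), (1 : ℤ)) ≠ ((1 : ℤ), (-1 : ℤ)))]
    rw [Gs_coeff_neg_one H hH u, Gs_coeff_neg_one H hH v, Gs_coeff_one H u, Gs_coeff_one H v]
    rw [div_eq_mul_inv, div_eq_mul_inv]
    ring
  · rw [Finset.mem_antidiagonal] at hnp
    push_neg at hnp
    simp only [Finset.mem_insert, Finset.mem_singleton] at hp
    rcases hp with h | h <;> subst h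
    · by_cases hm : (-1 : ℤ) ∈ (Gs H u).support
      · have := hnp hm
        by_cases hm2 : (1 : ℤ) ∈ (Gs H v).support
        · exact absurd (by norm_num) (this hm2)
        · simp only [HahnSeries.mem_support, not_not] at hm2
          rw [hm2, mul_zero]
      · simp only [HahnSeries.mem_support, not_not] at hm
        rw [hm, zero_mul]
    · by_cases hm : (1 : ℤ) ∈ (Gs H u).support
      · have := hnp hm
        by_cases hm2 : (-1 : ℤ) ∈ (Gs H v).support
        · exact absurd (by norm_num) (this hm2)
        · simp only [HahnSeries.mem_support, not_not] at hm2
          rw [hm2, mul_zero]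
      · simp only [HahnSeries.mem_support, not_not] at hm
        rw [hm, zero_mul]

lemma zscale_eq_Gs (H : PowerSeries R) (u : ℤ) :
    zscale ((u : ℤ) : R) (FH H) = Gs H u + HahnSeries.C (PowerSeries.coeff 1 H) := by
  rw [Gs, sub_add_cancel]

lemma SH_three (H : PowerSeries R) (w : Fin 3 → ℤ) :
    SH H w =
      zscale ((w 1 - w 0 : ℤ) : R) (FH H) * zscale ((w 2 - w 0 : ℤ) : R) (FH H)
      + zscale ((w 0 - w 1 : ℤ) : R) (FH H) * zscale ((w 2 - w 1 : ℤ) : R) (FH H)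
      + zscale ((w 0 - w 2 : ℤ) : R) (FH H) * zscale ((w 1 - w 2 : ℤ) : R) (FH H) := by
  rw [SH, Fin.sum_univ_three]
  have h0 : (Finset.univ.erase (0 : Fin 3)) = {1, 2} := by decide
  have h1 : (Finset.univ.erase (1 : Fin 3)) = {0, 2} := by decide
  have h2 : (Finset.univ.erase (2 : Fin 3)) = {0, 1} := by decide
  rw [h0, h1, h2, Finset.prod_pair (by decide), Finset.prod_pair (by decide),
    Finset.prod_pair (by decide)]

lemma Gs_triple (H : PowerSeries R) (hH : PowerSeries.constantCoeff H = 1)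
    (hrig : AlgRigid H 2) (a b c : ℤ) (hab : a ≠ b) (hbc : b ≠ c) (hac : a ≠ c) :
    Gs H (b - a) * Gs H (c - b) + Gs H (c - b) * Gs H (a - c)
      + Gs H (a - c) * Gs H (b - a) =
      HahnSeries.C (-3 * PowerSeries.coeff 2 H) := by
  have hx0 : b - a ≠ 0 := by omega
  have hy0 : c - b ≠ 0 := by omega
  have hz0 : a - c ≠ 0 := by omega
  have hw : Function.Injective (![a, b, c] : Fin 3 → ℤ) := by
    intro i j hij
    fin_cases i <;> fin_cases j <;> simp_all <;> omega
  have hrigS := hrig 2 (by norm_num) le_rfl ![a, b, c] hw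
  have hSH := SH_three H ![a, b, c]
  simp only [Matrix.cons_val_zero, Matrix.cons_val_one, Matrix.head_cons,
    Matrix.cons_val_two, Matrix.tail_cons] at hSH
  rw [show c - a = -(a - c) by ring, show a - b = -(b - a) by ring,
    show b - c = -(c - b) by ring] at hSH
  rw [zscale_eq_Gs, zscale_eq_Gs, zscale_eq_Gs, zscale_eq_Gs, zscale_eq_Gs, zscale_eq_Gs,
    Gs_anti H hrig _ hz0, Gs_anti H hrig _ hx0, Gs_anti H hrig _ hy0] at hSH
  set f0 := PowerSeries.coeff 1 H with hf0
  set h2 := PowerSeries.coeff 2 H with hh2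
  have key : Gs H (b - a) * Gs H (c - b) + Gs H (c - b) * Gs H (a - c)
      + Gs H (a - c) * Gs H (b - a) =
      HahnSeries.C f0 * HahnSeries.C f0 + HahnSeries.C f0 * HahnSeries.C f0
        + HahnSeries.C f0 * HahnSeries.C f0 - SH H ![a, b, c] := by
    linear_combination hSH
  have hCC : (HahnSeries.C f0 : LaurentSeries R) * HahnSeries.C f0 = HahnSeries.C (f0 * f0) := by
    simp only [HahnSeries.C_apply]
    rw [HahnSeries.single_mul_single, zero_add]
  ext k
  by_cases hk : k = 0
  · subst hk
    rw [HahnSeries.coeff_add, HahnSeries.coeff_add, Gs_mul_coeff_zero H hH,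
      Gs_mul_coeff_zero H hH, Gs_mul_coeff_zero H hH, HahnSeries.C_apply,
      HahnSeries.coeff_single_same]
    set X := ((b - a : ℤ) : R) with hX
    set Y := ((c - b : ℤ) : R) with hY
    set Z := ((a - c : ℤ) : R) with hZ
    have hXne : X ≠ 0 := Int.cast_ne_zero.mpr hx0
    have hYne : Y ≠ 0 := Int.cast_ne_zero.mpr hy0
    have hZne : Z ≠ 0 := Int.cast_ne_zero.mpr hz0
    have hXYZ : X + Y + Z = 0 := by rw [hX, hY, hZ]; push_cast; ring
    have pureId : Y / X + X / Y + (Z / Y + Y / Z) + (X / Z + Z / X) = -3 := by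
      field_simp
      rw [show Z = -X - Y by linear_combination hXYZ]; ring
    linear_combination h2 * pureId
  · rw [key, HahnSeries.coeff_sub, HahnSeries.coeff_add, HahnSeries.coeff_add, hCC,
      HahnSeries.C_apply, HahnSeries.coeff_single_of_ne hk, HahnSeries.C_apply,
      HahnSeries.coeff_single_of_ne hk, hrigS k hk]
    ring

lemma qseq_C (ε : R) : ∀ n : ℕ, qseq (HahnSeries.C ε : LaurentSeries R) n = HahnSeries.C (qseq ε n)
  | 0 => by simp [qseq]
  | 1 => by simp [qseq]
  | (n+2) => by
      rw [show qseq (HahnSeries.C ε : LaurentSeries R) (n+2)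
          = -((HahnSeries.C ε : LaurentSeries R) * qseq (HahnSeries.C ε : LaurentSeries R) n) from rfl,
        qseq_C ε n, show qseq ε (n+2) = -(ε * qseq ε n) from rfl, map_neg, map_mul]


/-- Corollary 4.2: if `H ∈ ℂ[[t]]` with constant term 1 is 2-algebraically
rigid, then it is strongly algebraically rigid, i.e. `AR² = AR³ = ⋯ = AR^∞`. -/
theorem algRigid_two_implies_strong (H : PowerSeries ℂ)
    (hH : PowerSeries.constantCoeff H = 1) (hrig : AlgRigid H 2) :
    ∀ n : ℕ, AlgRigid H n := by
  intro n m _ _ w hw k hk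
  classical
  set f0 := PowerSeries.coeff 1 H with hf0
  set h2 := PowerSeries.coeff 2 H with hh2
  set g : Fin (m+1) → Fin (m+1) → LaurentSeries ℂ := fun i j => Gs H (w j - w i) with hg
  have hanti : ∀ i j : Fin (m+1), i ≠ j → g j i = - g i j := by
    intro i j hij
    show Gs H (w i - w j) = - Gs H (w j - w i)
    rw [show w i - w j = -(w j - w i) by ring]
    exact Gs_anti H hrig _ (sub_ne_zero.mpr (hw.ne (Ne.symm hij)))
  have htriple : ∀ i j l : Fin (m+1), i ≠ j → j ≠ l → i ≠ l →
      g i j * g j l + g j l * g l i + g l i * g i j = HahnSeries.C (-3 * h2) := by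
    intro i j l hij hjl hil
    exact Gs_triple H hH hrig (w i) (w j) (w l) (hw.ne hij) (hw.ne hjl) (hw.ne hil)
  have hSH : SH H w = ∑ i : Fin (m+1), ∏ j ∈ Finset.univ.erase i, (g i j + HahnSeries.C f0) :=
    Finset.sum_congr rfl fun i _ => Finset.prod_congr rfl fun j _ => zscale_eq_Gs H _
  have h1 : ∀ i : Fin (m+1), (∏ j ∈ Finset.univ.erase i, (g i j + HahnSeries.C f0))
      = ∑ t ∈ (Finset.univ.erase i).powerset,
          (∏ j ∈ t, g i j) * (HahnSeries.C f0 : LaurentSeries ℂ) ^ (m - t.card) := by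
    intro i
    rw [Finset.prod_add]
    refine Finset.sum_congr rfl fun t ht => ?_
    rw [Finset.prod_const, Finset.card_sdiff_of_subset (Finset.mem_powerset.mp ht),
      Finset.card_erase_of_mem (Finset.mem_univ i), Finset.card_univ, Fintype.card_fin]
    norm_num
  have hexp : SH H w = ∑ A ∈ (Finset.univ : Finset (Fin (m+1))).powerset,
      (QQ g A) * (HahnSeries.C f0 : LaurentSeries ℂ) ^ (m + 1 - A.card) := by
    rw [hSH, Finset.sum_congr rfl fun i _ => h1 i]
    have hR : ∀ A ∈ (Finset.univ : Finset (Fin (m+1))).powerset,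
        (QQ g A) * (HahnSeries.C f0 : LaurentSeries ℂ) ^ (m + 1 - A.card)
        = ∑ i ∈ A, RR g i A * (HahnSeries.C f0 : LaurentSeries ℂ) ^ (m + 1 - A.card) := by
      intro A _
      rw [QQ, Finset.sum_mul]
    rw [Finset.sum_congr rfl hR, Finset.sum_sigma', Finset.sum_sigma']
    refine Finset.sum_bij' (fun x hx => ⟨insert x.1 x.2, x.1⟩)
      (fun y hy => ⟨y.2, y.1.erase y.2⟩) ?_ ?_ ?_ ?_ ?_
    · rintro ⟨i, t⟩ hx
      rw [Finset.mem_sigma] at hx ⊢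
      exact ⟨Finset.mem_powerset.mpr (Finset.subset_univ _), Finset.mem_insert_self _ _⟩
    · rintro ⟨A, i⟩ hy
      rw [Finset.mem_sigma] at hy ⊢
      refine ⟨Finset.mem_univ _, Finset.mem_powerset.mpr ?_⟩
      intro x hx
      rw [Finset.mem_erase] at hx ⊢
      exact ⟨hx.1, Finset.mem_univ x⟩
    · rintro ⟨i, t⟩ hx
      rw [Finset.mem_sigma] at hx
      have hit : i ∉ t := fun h =>
        (Finset.notMem_erase i Finset.univ) (Finset.mem_powerset.mp hx.2 h)
      simp [Finset.erase_insert hit]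
    · rintro ⟨A, i⟩ hy
      rw [Finset.mem_sigma] at hy
      simp [Finset.insert_erase hy.2]
    · rintro ⟨i, t⟩ hx
      rw [Finset.mem_sigma] at hx
      have hit : i ∉ t := fun h =>
        (Finset.notMem_erase i Finset.univ) (Finset.mem_powerset.mp hx.2 h)
      have hcard : (insert i t).card = t.card + 1 := Finset.card_insert_of_notMem hit
      rw [RR, Finset.erase_insert hit, hcard,
        show m + 1 - (t.card + 1) = m - t.card from by omega]
  have hQQ : ∀ A ∈ (Finset.univ : Finset (Fin (m+1))).powerset,
      (QQ g A) * (HahnSeries.C f0 : LaurentSeries ℂ) ^ (m + 1 - A.card)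
      = HahnSeries.C (qseq (-3 * h2) A.card * f0 ^ (m + 1 - A.card)) := by
    intro A _
    rw [QQ_eq g (HahnSeries.C (-3 * h2)) hanti htriple A.card A rfl, qseq_C,
      map_mul, map_pow]
  rw [hexp, Finset.sum_congr rfl hQQ, ← map_sum]
  rw [HahnSeries.C_apply, HahnSeries.coeff_single_of_ne hk]

end RigidGenus
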